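/- Define Q = Σ_{i=r+1}^{r+s} (1−σ_i²)⁻¹ V_i W̃_iᵀ − Σ_{i=r+1}^{r+s} σ_i(1−σ_i²)⁻¹ V_i Z̃_iᵀ + Σ_{i=r+s+1}^{K} V_i W̃_iᵀ ∈ ℝ^{K×n}. Then P_N = W Q, and the spectral norm of Q satisfies ‖Q‖ ≤ 2/(1 − σ_{r+1}²). -/

import Mathlib

open Matrix

lemma sum_fin_dite {m : ℕ} (t : ℕ) (f : Fin m → ℝ) :
    (∑ k : Fin m, if t = (k : ℕ) then f k else 0) = if h : t < m then f ⟨t, h⟩ else 0 := by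
  split_ifs with h
  · rw [Finset.sum_eq_single_of_mem ⟨t, h⟩ (Finset.mem_univ _), if_pos rfl]
    intro b _ hb
    exact if_neg fun he => hb (Fin.ext he.symm)
  · refine Finset.sum_eq_zero fun b _ => if_neg fun he => h (by omega)

lemma sum_fin_dite' {m : ℕ} (t : ℕ) (f : Fin m → ℝ) :
    (∑ k : Fin m, if (k : ℕ) = t then f k else 0) = if h : t < m then f ⟨t, h⟩ else 0 := by
  rw [← sum_fin_dite t f]
  exact Finset.sum_congr rfl fun b _ => if_congr eq_comm rfl rfl

lemma fin_shift_sum {m r q : ℕ} (hq : r + m = q) (f : ℕ → ℝ) :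
    (∑ j : Fin m, f (r + (j : ℕ))) = ∑ i ∈ Finset.Ico r q, f i := by
  subst hq
  rw [Finset.sum_Ico_eq_sum_range, show r + m - r = m from by omega,
    ← Fin.sum_univ_eq_sum_range (fun k => f (r + k)) m]

noncomputable def col {n q : ℕ} (A : Matrix (Fin n) (Fin q) ℝ) (i : ℕ) : Fin n → ℝ :=
  fun a => if h : i < q then A a ⟨i, h⟩ else 0

lemma col_apply {n q : ℕ} (A : Matrix (Fin n) (Fin q) ℝ) {i : ℕ} (h : i < q) (a : Fin n) :
    col A i a = A a ⟨i, h⟩ := dif_pos h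

lemma col_junk {n q : ℕ} (A : Matrix (Fin n) (Fin q) ℝ) {i : ℕ} (h : q ≤ i) (a : Fin n) :
    col A i a = 0 := dif_neg (by omega)
noncomputable def specNorm {m n : Type*} [Fintype m] [Fintype n] [DecidableEq n]
    (A : Matrix m n ℝ) : ℝ :=
  ‖LinearMap.toContinuousLinearMap (Matrix.toEuclideanLin A)‖

noncomputable def vnorm {n : Type*} [Fintype n] (v : n → ℝ) : ℝ :=
  Real.sqrt (∑ i, v i ^ 2)
set_option maxHeartbeats 2000000 in
theorem stmt_6
    (n p K r s : ℕ) (hs : 1 ≤ s) (hrp : r + s ≤ p) (hrK : r + s ≤ K)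
    (hpn : p ≤ n) (hKn : K ≤ n)
    (Z : Matrix (Fin n) (Fin p) ℝ) (W : Matrix (Fin n) (Fin K) ℝ)
    (hZ : Zᵀ * Z = 1) (hW : Wᵀ * W = 1)
    (U : Matrix (Fin p) (Fin p) ℝ) (V : Matrix (Fin K) (Fin K) ℝ)
    (hU : Uᵀ * U = 1) (hV : Vᵀ * V = 1)
    (σ : ℕ → ℝ)
    (hσone : ∀ i, i < r → σ i = 1)
    (hσlt : σ r < 1)
    (hσanti : ∀ i j, i ≤ j → σ j ≤ σ i)
    (hσpos : 0 < σ (r + s - 1))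
    (hσzero : ∀ i, r + s ≤ i → σ i = 0)
    (hSVD : Zᵀ * W
      = U * (Matrix.of fun (i : Fin p) (j : Fin K) =>
          if (i : ℕ) = (j : ℕ) then σ (i : ℕ) else 0) * Vᵀ)
    (Zt : Matrix (Fin n) (Fin p) ℝ) (hZt : Zt = Z * U)
    (Wt : Matrix (Fin n) (Fin K) ℝ) (hWt : Wt = W * V)
    (M : Matrix (Fin n) (Fin (p - r) ⊕ Fin (K - r)) ℝ)
    (hMl : ∀ (a : Fin n) (j : Fin (p - r)),
      M a (Sum.inl j) = Zt a ⟨r + j.1, by have := j.2; omega⟩)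
    (hMr : ∀ (a : Fin n) (j : Fin (K - r)),
      M a (Sum.inr j) = Wt a ⟨r + j.1, by have := j.2; omega⟩)
    (PR PC PN : Matrix (Fin n) (Fin n) ℝ)
    (hPR : PR = ∑ i ∈ (Finset.range r).attach,
      Matrix.vecMulVec
        (fun a : Fin n => Zt a ⟨i.1, by have := Finset.mem_range.mp i.2; omega⟩)
        (fun a : Fin n => Zt a ⟨i.1, by have := Finset.mem_range.mp i.2; omega⟩))
    (hPC : PC = (Matrix.of fun (a : Fin n) (j : Fin (p - r) ⊕ Fin (K - r)) =>
        Sum.elim (fun j' : Fin (p - r) => Zt a ⟨r + j'.1, by have := j'.2; omega⟩)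
                 (fun _ : Fin (K - r) => (0 : ℝ)) j) * (Mᵀ * M)⁻¹ * Mᵀ)
    (hPN : PN = (Matrix.of fun (a : Fin n) (j : Fin (p - r) ⊕ Fin (K - r)) =>
        Sum.elim (fun _ : Fin (p - r) => (0 : ℝ))
                 (fun j' : Fin (K - r) => Wt a ⟨r + j'.1, by have := j'.2; omega⟩) j)
        * (Mᵀ * M)⁻¹ * Mᵀ)
    (Q : Matrix (Fin K) (Fin n) ℝ)
    (hQ : Q = (∑ i ∈ (Finset.Ico r (r + s)).attach,
            (1 - σ i.1 ^ 2)⁻¹ • Matrix.vecMulVec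
              (fun a : Fin K => V a ⟨i.1, by have := (Finset.mem_Ico.mp i.2).2; omega⟩)
              (fun a : Fin n => Wt a ⟨i.1, by have := (Finset.mem_Ico.mp i.2).2; omega⟩))
       - (∑ i ∈ (Finset.Ico r (r + s)).attach,
            (σ i.1 / (1 - σ i.1 ^ 2)) • Matrix.vecMulVec
              (fun a : Fin K => V a ⟨i.1, by have := (Finset.mem_Ico.mp i.2).2; omega⟩)
              (fun a : Fin n => Zt a ⟨i.1, by have := (Finset.mem_Ico.mp i.2).2; omega⟩))
       + (∑ i ∈ (Finset.Ico (r + s) K).attach,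
            Matrix.vecMulVec
              (fun a : Fin K => V a ⟨i.1, (Finset.mem_Ico.mp i.2).2⟩)
              (fun a : Fin n => Wt a ⟨i.1, (Finset.mem_Ico.mp i.2).2⟩))) :
    PN = W * Q ∧ specNorm Q ≤ 2 / (1 - σ r ^ 2) := by
  classical
  have hσnn : ∀ i, 0 ≤ σ i := by
    intro i
    rcases lt_or_ge i r with h | h
    · rw [hσone i h]; norm_num
    rcases lt_or_ge i (r + s) with h2 | h2
    · exact le_trans hσpos.le (hσanti i (r + s - 1) (by omega))
    · rw [hσzero i h2]
  have hσlt1 : ∀ i, r ≤ i → σ i < 1 := fun i hi => lt_of_le_of_lt (hσanti r i hi) hσlt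
  have ht : ∀ i, r ≤ i → 0 < 1 - σ i ^ 2 := by
    intro i hi; have h1 := hσnn i; have h2 := hσlt1 i hi; nlinarith
  have htne : ∀ i, r ≤ i → 1 - σ i ^ 2 ≠ 0 := fun i hi => ne_of_gt (ht i hi)
  have htr : 0 < 1 - σ r ^ 2 := ht r le_rfl
  have hZtZ : Ztᵀ * Zt = 1 := by
    rw [hZt, transpose_mul, Matrix.mul_assoc, ← Matrix.mul_assoc Zᵀ Z U, hZ, one_mul, hU]
  have hWtW : Wtᵀ * Wt = 1 := by
    rw [hWt, transpose_mul, Matrix.mul_assoc, ← Matrix.mul_assoc Wᵀ W V, hW, one_mul, hV]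
  have hZtWt : Ztᵀ * Wt = Matrix.of
      (fun (i : Fin p) (j : Fin K) => if (i : ℕ) = (j : ℕ) then σ (i : ℕ) else 0) := by
    rw [hZt, hWt, transpose_mul, Matrix.mul_assoc, ← Matrix.mul_assoc Zᵀ W V, hSVD,
      Matrix.mul_assoc (U * _) Vᵀ V, hV, Matrix.mul_one, ← Matrix.mul_assoc Uᵀ U _, hU,
      Matrix.one_mul]
  have dZZ : ∀ i j : ℕ, (∑ a, col Zt i a * col Zt j a) = if i = j ∧ i < p then 1 else 0 := by
    intro i j
    by_cases hi : i < p
    · by_cases hj : j < p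
      · have h2 : (∑ a, col Zt i a * col Zt j a)
            = (1 : Matrix (Fin p) (Fin p) ℝ) ⟨i, hi⟩ ⟨j, hj⟩ := by
          rw [← hZtZ, mul_apply]
          exact Finset.sum_congr rfl fun a _ => by
            rw [col_apply Zt hi, col_apply Zt hj, transpose_apply]
        simp only [h2, one_apply, Fin.mk.injEq]
        by_cases hij : i = j
        · subst hij; simp [hi]
        · simp [hij]
      · rw [Finset.sum_eq_zero fun a _ => by rw [col_junk Zt (le_of_not_gt hj), mul_zero]]
        rw [if_neg (fun hc : i = j ∧ i < p => hj (hc.1 ▸ hc.2))]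
    · rw [Finset.sum_eq_zero fun a _ => by rw [col_junk Zt (le_of_not_gt hi), zero_mul]]
      rw [if_neg (fun hc : i = j ∧ i < p => hi hc.2)]
  have dWW : ∀ i j : ℕ, (∑ a, col Wt i a * col Wt j a) = if i = j ∧ i < K then 1 else 0 := by
    intro i j
    by_cases hi : i < K
    · by_cases hj : j < K
      · have h2 : (∑ a, col Wt i a * col Wt j a)
            = (1 : Matrix (Fin K) (Fin K) ℝ) ⟨i, hi⟩ ⟨j, hj⟩ := by
          rw [← hWtW, mul_apply]
          exact Finset.sum_congr rfl fun a _ => by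
            rw [col_apply Wt hi, col_apply Wt hj, transpose_apply]
        simp only [h2, one_apply, Fin.mk.injEq]
        by_cases hij : i = j
        · subst hij; simp [hi]
        · simp [hij]
      · rw [Finset.sum_eq_zero fun a _ => by rw [col_junk Wt (le_of_not_gt hj), mul_zero]]
        rw [if_neg (fun hc : i = j ∧ i < K => hj (hc.1 ▸ hc.2))]
    · rw [Finset.sum_eq_zero fun a _ => by rw [col_junk Wt (le_of_not_gt hi), zero_mul]]
      rw [if_neg (fun hc : i = j ∧ i < K => hi hc.2)]
  have dVV : ∀ i j : ℕ, (∑ a, col V i a * col V j a) = if i = j ∧ i < K then 1 else 0 := by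
    intro i j
    by_cases hi : i < K
    · by_cases hj : j < K
      · have h2 : (∑ a, col V i a * col V j a)
            = (1 : Matrix (Fin K) (Fin K) ℝ) ⟨i, hi⟩ ⟨j, hj⟩ := by
          rw [← hV, mul_apply]
          exact Finset.sum_congr rfl fun a _ => by
            rw [col_apply V hi, col_apply V hj, transpose_apply]
        simp only [h2, one_apply, Fin.mk.injEq]
        by_cases hij : i = j
        · subst hij; simp [hi]
        · simp [hij]
      · rw [Finset.sum_eq_zero fun a _ => by rw [col_junk V (le_of_not_gt hj), mul_zero]]
        rw [if_neg (fun hc : i = j ∧ i < K => hj (hc.1 ▸ hc.2))]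
    · rw [Finset.sum_eq_zero fun a _ => by rw [col_junk V (le_of_not_gt hi), zero_mul]]
      rw [if_neg (fun hc : i = j ∧ i < K => hi hc.2)]
  have dZW : ∀ i j : ℕ, (∑ a, col Zt i a * col Wt j a)
      = if i = j ∧ i < p ∧ j < K then σ i else 0 := by
    intro i j
    by_cases hi : i < p
    · by_cases hj : j < K
      · have h2 : (∑ a, col Zt i a * col Wt j a)
            = (Matrix.of (fun (i : Fin p) (j : Fin K) =>
                if (i : ℕ) = (j : ℕ) then σ (i : ℕ) else 0)) ⟨i, hi⟩ ⟨j, hj⟩ := by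
          rw [← hZtWt, mul_apply]
          exact Finset.sum_congr rfl fun a _ => by
            rw [col_apply Zt hi, col_apply Wt hj, transpose_apply]
        simp only [h2, Matrix.of_apply]
        by_cases hij : i = j
        · subst hij; simp [hi, hj]
        · simp [hij]
      · rw [Finset.sum_eq_zero fun a _ => by rw [col_junk Wt (le_of_not_gt hj), mul_zero]]
        rw [if_neg (fun hc : i = j ∧ i < p ∧ j < K => hj hc.2.2)]
    · rw [Finset.sum_eq_zero fun a _ => by rw [col_junk Zt (le_of_not_gt hi), zero_mul]]
      rw [if_neg (fun hc : i = j ∧ i < p ∧ j < K => hi hc.2.1)]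
  have hMl' : ∀ (a : Fin n) (j : Fin (p - r)), M a (Sum.inl j) = col Zt (r + j.1) a := by
    intro a j
    rw [hMl a j, col_apply Zt (show r + j.1 < p by have := j.2; omega)]
  have hMr' : ∀ (a : Fin n) (j : Fin (K - r)), M a (Sum.inr j) = col Wt (r + j.1) a := by
    intro a j
    rw [hMr a j, col_apply Wt (show r + j.1 < K by have := j.2; omega)]
  have hT : ∀ x y, (Mᵀ * M) x y = ∑ a, M a x * M a y := by
    intro x y; rw [mul_apply]; simp only [transpose_apply]
  set G : Matrix (Fin (p - r) ⊕ Fin (K - r)) (Fin (p - r) ⊕ Fin (K - r)) ℝ :=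
    Matrix.of (Sum.elim
      (fun i => Sum.elim
        (fun j : Fin (p - r) => if (i : ℕ) = (j : ℕ) then (1 - σ (r + i) ^ 2)⁻¹ else 0)
        (fun j : Fin (K - r) =>
          if (i : ℕ) = (j : ℕ) then -(σ (r + i) * (1 - σ (r + i) ^ 2)⁻¹) else 0))
      (fun i => Sum.elim
        (fun j : Fin (p - r) =>
          if (i : ℕ) = (j : ℕ) then -(σ (r + i) * (1 - σ (r + i) ^ 2)⁻¹) else 0)
        (fun j : Fin (K - r) => if (i : ℕ) = (j : ℕ) then (1 - σ (r + i) ^ 2)⁻¹ else 0)))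
    with hGdef
  have hGll : ∀ (i j : Fin (p - r)), G (Sum.inl i) (Sum.inl j)
      = if (i : ℕ) = (j : ℕ) then (1 - σ (r + i) ^ 2)⁻¹ else 0 := fun i j => rfl
  have hGlr : ∀ (i : Fin (p - r)) (j : Fin (K - r)), G (Sum.inl i) (Sum.inr j)
      = if (i : ℕ) = (j : ℕ) then -(σ (r + i) * (1 - σ (r + i) ^ 2)⁻¹) else 0 := fun i j => rfl
  have hGrl : ∀ (i : Fin (K - r)) (j : Fin (p - r)), G (Sum.inr i) (Sum.inl j)
      = if (i : ℕ) = (j : ℕ) then -(σ (r + i) * (1 - σ (r + i) ^ 2)⁻¹) else 0 := fun i j => rfl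
  have hGrr : ∀ (i j : Fin (K - r)), G (Sum.inr i) (Sum.inr j)
      = if (i : ℕ) = (j : ℕ) then (1 - σ (r + i) ^ 2)⁻¹ else 0 := fun i j => rfl
  have hTG : (Mᵀ * M) * G = 1 := by
    ext x y
    rw [mul_apply, Fintype.sum_sum_type]
    cases x with
    | inl i =>
      have e1 : ∀ k : Fin (p - r), (Mᵀ * M) (Sum.inl i) (Sum.inl k)
          = if (i : ℕ) = (k : ℕ) then 1 else 0 := by
        intro k
        rw [hT]
        simp only [hMl']
        rw [dZZ]
        exact if_congr (by have := i.2; omega) rfl rfl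
      have e2 : ∀ k : Fin (K - r), (Mᵀ * M) (Sum.inl i) (Sum.inr k)
          = if (i : ℕ) = (k : ℕ) then σ (r + i) else 0 := by
        intro k
        rw [hT]
        simp only [hMl', hMr']
        rw [dZW]
        exact if_congr (by have := i.2; have := k.2; omega) rfl rfl
      cases y with
      | inl j =>
        simp only [e1, e2, hGll, hGrl, ite_mul, one_mul, zero_mul]
        rw [sum_fin_dite, sum_fin_dite, dif_pos i.isLt, one_apply]
        simp only [Fin.val_mk]
        have hyy : ((Sum.inl i : Fin (p - r) ⊕ Fin (K - r)) = Sum.inl j) ↔ ((i : ℕ) = (j : ℕ)) := by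
          simp [Fin.ext_iff]
        rw [if_congr hyy rfl rfl]
        by_cases hij : (i : ℕ) = (j : ℕ)
        · simp only [if_pos hij]
          by_cases hK : (i : ℕ) < K - r
          · rw [dif_pos hK]
            have h0 := htne (r + i) (by omega)
            field_simp
            ring
          · rw [dif_neg hK, hσzero (r + i) (by omega)]
            norm_num
        · simp only [if_neg hij]
          split_ifs <;> norm_num
      | inr j =>
        simp only [e1, e2, hGlr, hGrr, ite_mul, one_mul, zero_mul]
        rw [sum_fin_dite, sum_fin_dite, dif_pos i.isLt, one_apply]
        simp only [Fin.val_mk]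
        rw [if_neg (by simp : ¬((Sum.inl i : Fin (p - r) ⊕ Fin (K - r)) = Sum.inr j))]
        by_cases hij : (i : ℕ) = (j : ℕ)
        · simp only [if_pos hij]
          rw [dif_pos (show (i : ℕ) < K - r from hij ▸ j.isLt)]
          ring
        · simp only [if_neg hij]
          split_ifs <;> norm_num
    | inr i =>
      have e3 : ∀ k : Fin (p - r), (Mᵀ * M) (Sum.inr i) (Sum.inl k)
          = if (i : ℕ) = (k : ℕ) then σ (r + (k : ℕ)) else 0 := by
        intro k
        rw [hT]
        simp only [hMl', hMr']
        rw [show (∑ a, col Wt (r + (i : ℕ)) a * col Zt (r + (k : ℕ)) a)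
            = ∑ a, col Zt (r + (k : ℕ)) a * col Wt (r + (i : ℕ)) a from
          Finset.sum_congr rfl fun a _ => mul_comm _ _]
        rw [dZW]
        exact if_congr (by have := i.2; have := k.2; omega) rfl rfl
      have e4 : ∀ k : Fin (K - r), (Mᵀ * M) (Sum.inr i) (Sum.inr k)
          = if (i : ℕ) = (k : ℕ) then 1 else 0 := by
        intro k
        rw [hT]
        simp only [hMr']
        rw [dWW]
        exact if_congr (by have := i.2; omega) rfl rfl
      cases y with
      | inl j =>
        simp only [e3, e4, hGll, hGrl, ite_mul, one_mul, zero_mul]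
        rw [sum_fin_dite, sum_fin_dite, dif_pos i.isLt, one_apply]
        simp only [Fin.val_mk]
        rw [if_neg (by simp : ¬((Sum.inr i : Fin (p - r) ⊕ Fin (K - r)) = Sum.inl j))]
        by_cases hij : (i : ℕ) = (j : ℕ)
        · simp only [if_pos hij]
          rw [dif_pos (show (i : ℕ) < p - r from hij ▸ j.isLt)]
          ring
        · simp only [if_neg hij]
          split_ifs <;> norm_num
      | inr j =>
        simp only [e3, e4, hGlr, hGrr, ite_mul, one_mul, zero_mul]
        rw [sum_fin_dite, sum_fin_dite, dif_pos i.isLt, one_apply]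
        simp only [Fin.val_mk]
        have hyy : ((Sum.inr i : Fin (p - r) ⊕ Fin (K - r)) = Sum.inr j)
            ↔ ((i : ℕ) = (j : ℕ)) := by
          simp [Fin.ext_iff]
        rw [if_congr hyy rfl rfl]
        by_cases hij : (i : ℕ) = (j : ℕ)
        · simp only [if_pos hij]
          by_cases hp : (i : ℕ) < p - r
          · rw [dif_pos hp]
            have h0 := htne (r + i) (by omega)
            field_simp
            ring
          · rw [dif_neg hp, hσzero (r + i) (by omega)]
            norm_num
        · simp only [if_neg hij]
          split_ifs <;> norm_num
  have hGinv : (Mᵀ * M)⁻¹ = G := Matrix.inv_eq_right_inv hTG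
  have hPNab : ∀ a b : Fin n, PN a b
      = (∑ i ∈ Finset.Ico r p, (-(σ i * (1 - σ i ^ 2)⁻¹) * col Wt i a) * col Zt i b)
      + ∑ i ∈ Finset.Ico r K, ((1 - σ i ^ 2)⁻¹ * col Wt i a) * col Wt i b := by
    intro a b
    rw [hPN, hGinv]
    rw [← fin_shift_sum (show r + (p - r) = p by omega)
        (fun i => (-(σ i * (1 - σ i ^ 2)⁻¹) * col Wt i a) * col Zt i b),
      ← fin_shift_sum (show r + (K - r) = K by omega)
        (fun i => ((1 - σ i ^ 2)⁻¹ * col Wt i a) * col Wt i b)]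
    rw [mul_apply]
    simp only [transpose_apply]
    rw [Fintype.sum_sum_type]
    congr 1
    · refine Finset.sum_congr rfl fun j _ => ?_
      rw [mul_apply, Fintype.sum_sum_type]
      simp only [Matrix.of_apply, Sum.elim_inl, Sum.elim_inr, zero_mul,
        Finset.sum_const_zero, zero_add]
      simp only [hGrl, mul_ite, mul_zero]
      rw [sum_fin_dite', hMl']
      by_cases h : (j : ℕ) < K - r
      · rw [dif_pos h]
        simp only [Fin.val_mk]
        rw [show ∀ (pf : r + (j : ℕ) < K), Wt a ⟨r + (j : ℕ), pf⟩ = col Wt (r + (j : ℕ)) a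
          from fun pf => (col_apply Wt pf a).symm]
        ring
      · rw [dif_neg h, hσzero (r + (j : ℕ)) (by omega)]
        rw [col_junk Wt (show K ≤ r + (j : ℕ) by omega)]
        ring
    · refine Finset.sum_congr rfl fun j _ => ?_
      rw [mul_apply, Fintype.sum_sum_type]
      simp only [Matrix.of_apply, Sum.elim_inl, Sum.elim_inr, zero_mul,
        Finset.sum_const_zero, zero_add]
      simp only [hGrr, mul_ite, mul_zero]
      rw [sum_fin_dite', hMr', dif_pos j.isLt]
      simp only [Fin.val_mk]
      rw [show ∀ (pf : r + (j : ℕ) < K), Wt a ⟨r + (j : ℕ), pf⟩ = col Wt (r + (j : ℕ)) a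
        from fun pf => (col_apply Wt pf a).symm]
      ring
  have convQ : ∀ (c : Fin K) (b : Fin n), Q c b
      = (∑ i ∈ Finset.Ico r (r + s), ((1 - σ i ^ 2)⁻¹ * (col V i c * col Wt i b)
          - (σ i / (1 - σ i ^ 2)) * (col V i c * col Zt i b)))
      + ∑ i ∈ Finset.Ico (r + s) K, col V i c * col Wt i b := by
    intro c b
    rw [hQ]
    simp only [Matrix.add_apply, Matrix.sub_apply, Matrix.sum_apply, Matrix.smul_apply,
      Matrix.vecMulVec_apply, smul_eq_mul]
    rw [Finset.sum_sub_distrib]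
    congr 1
    · congr 1
      · rw [show (∑ i ∈ Finset.Ico r (r + s), (1 - σ i ^ 2)⁻¹ * (col V i c * col Wt i b))
            = ∑ i ∈ (Finset.Ico r (r + s)).attach,
              (1 - σ (i : ℕ) ^ 2)⁻¹ * (col V (i : ℕ) c * col Wt (i : ℕ) b)
          from (Finset.sum_attach _ _).symm]
        refine Finset.sum_congr rfl fun i _ => ?_
        have h1 : (i : ℕ) < K := by have := (Finset.mem_Ico.mp i.2).2; omega
        rw [col_apply V h1, col_apply Wt h1]
      · rw [show (∑ i ∈ Finset.Ico r (r + s), (σ i / (1 - σ i ^ 2)) * (col V i c * col Zt i b))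
            = ∑ i ∈ (Finset.Ico r (r + s)).attach,
              (σ (i : ℕ) / (1 - σ (i : ℕ) ^ 2)) * (col V (i : ℕ) c * col Zt (i : ℕ) b)
          from (Finset.sum_attach _ _).symm]
        refine Finset.sum_congr rfl fun i _ => ?_
        have h1 : (i : ℕ) < K := by have := (Finset.mem_Ico.mp i.2).2; omega
        have h2 : (i : ℕ) < p := by have := (Finset.mem_Ico.mp i.2).2; omega
        rw [col_apply V h1, col_apply Zt h2]
    · rw [show (∑ i ∈ Finset.Ico (r + s) K, col V i c * col Wt i b)
          = ∑ i ∈ (Finset.Ico (r + s) K).attach,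
            col V (i : ℕ) c * col Wt (i : ℕ) b
        from (Finset.sum_attach _ _).symm]
      refine Finset.sum_congr rfl fun i _ => ?_
      have h1 : (i : ℕ) < K := (Finset.mem_Ico.mp i.2).2
      rw [col_apply V h1, col_apply Wt h1]
  have hWVc : ∀ (a : Fin n) (i : ℕ), (∑ c, W a c * col V i c) = col Wt i a := by
    intro a i
    by_cases h : i < K
    · rw [col_apply Wt h, hWt, mul_apply]
      exact Finset.sum_congr rfl fun c _ => by rw [col_apply V h]
    · rw [col_junk Wt (le_of_not_gt h)]
      exact Finset.sum_eq_zero fun c _ => by rw [col_junk V (le_of_not_gt h), mul_zero]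
  have hWQ : ∀ a b : Fin n, (W * Q) a b
      = (∑ i ∈ Finset.Ico r (r + s), col Wt i a * ((1 - σ i ^ 2)⁻¹ * col Wt i b
          - (σ i / (1 - σ i ^ 2)) * col Zt i b))
      + ∑ i ∈ Finset.Ico (r + s) K, col Wt i a * col Wt i b := by
    intro a b
    rw [mul_apply]
    rw [Finset.sum_congr rfl fun c (_ : c ∈ Finset.univ) => by rw [convQ c b]]
    simp only [mul_add, Finset.mul_sum]
    rw [Finset.sum_add_distrib]
    congr 1
    · rw [Finset.sum_comm]
      refine Finset.sum_congr rfl fun i _ => ?_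
      have e : ∀ c, W a c * ((1 - σ i ^ 2)⁻¹ * (col V i c * col Wt i b)
            - (σ i / (1 - σ i ^ 2)) * (col V i c * col Zt i b))
          = (W a c * col V i c) * ((1 - σ i ^ 2)⁻¹ * col Wt i b
            - (σ i / (1 - σ i ^ 2)) * col Zt i b) := fun c => by ring
      rw [Finset.sum_congr rfl fun c _ => e c, ← Finset.sum_mul, hWVc]
    · rw [Finset.sum_comm]
      refine Finset.sum_congr rfl fun i _ => ?_
      have e : ∀ c, W a c * (col V i c * col Wt i b)
          = (W a c * col V i c) * col Wt i b := fun c => by ring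
      rw [Finset.sum_congr rfl fun c _ => e c, ← Finset.sum_mul, hWVc]
  have part1 : PN = W * Q := by
    ext a b
    rw [hPNab a b, hWQ a b]
    rw [← Finset.sum_Ico_consecutive _ (show r ≤ r + s by omega) (show r + s ≤ p from hrp),
      ← Finset.sum_Ico_consecutive _ (show r ≤ r + s by omega) (show r + s ≤ K from hrK)]
    have z1 : (∑ i ∈ Finset.Ico (r + s) p, (-(σ i * (1 - σ i ^ 2)⁻¹) * col Wt i a) * col Zt i b)
        = 0 :=
      Finset.sum_eq_zero fun i hi => by
        rw [hσzero i (Finset.mem_Ico.mp hi).1]; ring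
    have z2 : (∑ i ∈ Finset.Ico (r + s) K, ((1 - σ i ^ 2)⁻¹ * col Wt i a) * col Wt i b)
        = ∑ i ∈ Finset.Ico (r + s) K, col Wt i a * col Wt i b :=
      Finset.sum_congr rfl fun i hi => by
        rw [hσzero i (Finset.mem_Ico.mp hi).1]; norm_num
    rw [z1, z2, add_zero]
    have z3 : (∑ i ∈ Finset.Ico r (r + s), col Wt i a * ((1 - σ i ^ 2)⁻¹ * col Wt i b
          - (σ i / (1 - σ i ^ 2)) * col Zt i b))
        = (∑ i ∈ Finset.Ico r (r + s), (-(σ i * (1 - σ i ^ 2)⁻¹) * col Wt i a) * col Zt i b)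
        + ∑ i ∈ Finset.Ico r (r + s), ((1 - σ i ^ 2)⁻¹ * col Wt i a) * col Wt i b := by
      rw [← Finset.sum_add_distrib]
      refine Finset.sum_congr rfl fun i _ => ?_
      rw [div_eq_mul_inv]
      ring
    rw [z3]
    ring
  set vv : ℕ → Fin n → ℝ := fun i b =>
    (1 - σ i ^ 2)⁻¹ * col Wt i b - (σ i * (1 - σ i ^ 2)⁻¹) * col Zt i b with hvv
  have hQ2 : ∀ (c : Fin K) (b : Fin n), Q c b
      = ∑ i ∈ Finset.Ico r K, col V i c * vv i b := by
    intro c b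
    rw [convQ, ← Finset.sum_Ico_consecutive _ (show r ≤ r + s by omega)
        (show r + s ≤ K from hrK)]
    congr 1
    · refine Finset.sum_congr rfl fun i _ => ?_
      simp only [hvv]
      rw [div_eq_mul_inv]
      ring
    · refine Finset.sum_congr rfl fun i hi => ?_
      simp only [hvv]
      rw [hσzero i (Finset.mem_Ico.mp hi).1]
      norm_num
  have dvv : ∀ i j : ℕ, r ≤ i → r ≤ j → i < K → j < K →
      (∑ a, vv i a * vv j a) = if i = j then (1 - σ i ^ 2)⁻¹ else 0 := by
    intro i j hi hj hiK hjK
    have e : ∀ a, vv i a * vv j a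
        = ((1 - σ i ^ 2)⁻¹ * (1 - σ j ^ 2)⁻¹) * (col Wt i a * col Wt j a)
        - ((1 - σ i ^ 2)⁻¹ * (σ j * (1 - σ j ^ 2)⁻¹)) * (col Zt j a * col Wt i a)
        - ((σ i * (1 - σ i ^ 2)⁻¹) * (1 - σ j ^ 2)⁻¹) * (col Zt i a * col Wt j a)
        + ((σ i * (1 - σ i ^ 2)⁻¹) * (σ j * (1 - σ j ^ 2)⁻¹)) * (col Zt i a * col Zt j a) := by
      intro a; simp only [hvv]; ring
    rw [Finset.sum_congr rfl fun a _ => e a]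
    rw [Finset.sum_add_distrib, Finset.sum_sub_distrib, Finset.sum_sub_distrib,
      ← Finset.mul_sum, ← Finset.mul_sum, ← Finset.mul_sum, ← Finset.mul_sum,
      dWW, dZW, dZW, dZZ]
    by_cases hij : i = j
    · subst hij
      by_cases hp : i < p
      · have h0 := htne i hi
        rw [if_pos (⟨rfl, hiK⟩ : i = i ∧ i < K),
          if_pos (⟨rfl, hp, hiK⟩ : i = i ∧ i < p ∧ i < K),
          if_pos (⟨rfl, hp⟩ : i = i ∧ i < p), if_pos rfl]
        have h1 : (1 - σ i ^ 2) * (1 - σ i ^ 2)⁻¹ = 1 := mul_inv_cancel₀ h0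
        nlinarith [h1, sq_nonneg ((1 - σ i ^ 2)⁻¹)]
      · have h0 : σ i = 0 := hσzero i (by omega)
        simp [hp, hiK, h0]
    · have hji : ¬ j = i := fun h => hij h.symm
      simp [hij, hji]
  have hsqrt : ∀ i, r ≤ i → Real.sqrt (1 - σ i ^ 2) * Real.sqrt (1 - σ i ^ 2) = 1 - σ i ^ 2 :=
    fun i hi => Real.mul_self_sqrt (le_of_lt (ht i hi))
  set ee : Fin (K - r) → EuclideanSpace ℝ (Fin n) :=
    fun j => (WithLp.equiv 2 (Fin n → ℝ)).symm
      (fun a => Real.sqrt (1 - σ (r + (j : ℕ)) ^ 2) * vv (r + (j : ℕ)) a) with hee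
  have hee_apply : ∀ (j : Fin (K - r)) (a : Fin n),
      ee j a = Real.sqrt (1 - σ (r + (j : ℕ)) ^ 2) * vv (r + (j : ℕ)) a := fun j a => rfl
  have hinner : ∀ (u w : EuclideanSpace ℝ (Fin n)), (inner ℝ u w : ℝ) = ∑ a, u a * w a := by
    intro u w
    simp [PiLp.inner_apply, RCLike.inner_apply, conj_trivial, mul_comm]
  have horth : Orthonormal ℝ ee := by
    rw [orthonormal_iff_ite]
    intro j k
    rw [hinner]
    have e1 : (∑ a, ee j a * ee k a)
        = Real.sqrt (1 - σ (r + (j : ℕ)) ^ 2) * Real.sqrt (1 - σ (r + (k : ℕ)) ^ 2)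
          * ∑ a, vv (r + (j : ℕ)) a * vv (r + (k : ℕ)) a := by
      rw [Finset.mul_sum]
      exact Finset.sum_congr rfl fun a _ => by rw [hee_apply, hee_apply]; ring
    rw [e1, dvv _ _ (by omega) (by omega) (by omega) (by omega)]
    by_cases hjk : j = k
    · subst hjk
      rw [if_pos rfl, if_pos rfl, hsqrt _ (by omega), mul_inv_cancel₀ (htne _ (by omega))]
    · have : ¬ (r + (j : ℕ) = r + (k : ℕ)) := fun h => hjk (Fin.ext (by omega))
      rw [if_neg this, mul_zero, if_neg hjk]
  refine ⟨part1, ?_⟩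
  have hc : (0:ℝ) ≤ 2 / (1 - σ r ^ 2) := by positivity
  have hspec : specNorm Q = ‖LinearMap.toContinuousLinearMap (Matrix.toEuclideanLin Q)‖ := rfl
  rw [hspec]
  refine ContinuousLinearMap.opNorm_le_bound _ hc ?_
  intro x
  set y : EuclideanSpace ℝ (Fin K) :=
    LinearMap.toContinuousLinearMap (Matrix.toEuclideanLin Q) x with hy
  have hyc : ∀ c : Fin K, y c = ∑ b, Q c b * x b := by
    intro c
    rw [hy]
    simp [LinearMap.coe_toContinuousLinearMap', Matrix.toEuclideanLin_apply, Matrix.mulVec,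
      dotProduct]
  set d : Fin (K - r) → ℝ := fun j => ∑ b, vv (r + (j : ℕ)) b * x b with hd
  have hQc : ∀ (c : Fin K) (b : Fin n), Q c b
      = ∑ j : Fin (K - r), col V (r + (j : ℕ)) c * vv (r + (j : ℕ)) b := by
    intro c b
    rw [hQ2, ← fin_shift_sum (show r + (K - r) = K by omega) (fun i => col V i c * vv i b)]
  have hyc2 : ∀ c : Fin K, y c = ∑ j : Fin (K - r), col V (r + (j : ℕ)) c * d j := by
    intro c
    rw [hyc, Finset.sum_congr rfl fun b (_ : b ∈ Finset.univ) => by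
        rw [hQc c b, Finset.sum_mul],
      Finset.sum_comm]
    refine Finset.sum_congr rfl fun j _ => ?_
    rw [hd, Finset.mul_sum]
    exact Finset.sum_congr rfl fun b _ => by ring
  have hsum : (∑ c, y c ^ 2) = ∑ j : Fin (K - r), d j ^ 2 := by
    rw [Finset.sum_congr rfl fun c (_ : c ∈ Finset.univ) => by
      rw [hyc2 c, pow_two, Finset.sum_mul_sum]]
    rw [Finset.sum_comm]
    refine Finset.sum_congr rfl fun j _ => ?_
    rw [Finset.sum_comm]
    have hinnerk : ∀ k : Fin (K - r),
        (∑ c, (col V (r + (j : ℕ)) c * d j) * (col V (r + (k : ℕ)) c * d k))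
        = if (j : ℕ) = (k : ℕ) then d j * d k else 0 := by
      intro k
      rw [show (∑ c, (col V (r + (j : ℕ)) c * d j) * (col V (r + (k : ℕ)) c * d k))
          = (d j * d k) * ∑ c, col V (r + (j : ℕ)) c * col V (r + (k : ℕ)) c from by
        rw [Finset.mul_sum]; exact Finset.sum_congr rfl fun c _ => by ring]
      rw [dVV]
      rw [if_congr (show ((r + (j : ℕ) = r + (k : ℕ)) ∧ r + (j : ℕ) < K) ↔ (j : ℕ) = (k : ℕ)
        from by have := j.2; omega) rfl rfl]
      split_ifs with h1
      · ring
      · ring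
    rw [Finset.sum_congr rfl fun k _ => hinnerk k, sum_fin_dite, dif_pos j.isLt]
    simp [Fin.eta, pow_two]
  have hbessel : (∑ j : Fin (K - r), ‖(inner ℝ (ee j) x : ℝ)‖ ^ 2) ≤ ‖x‖ ^ 2 :=
    horth.sum_inner_products_le x
  have hdj : ∀ j : Fin (K - r), d j ^ 2
      = (1 - σ (r + (j : ℕ)) ^ 2)⁻¹ * ‖(inner ℝ (ee j) x : ℝ)‖ ^ 2 := by
    intro j
    have h1 : (inner ℝ (ee j) x : ℝ) = Real.sqrt (1 - σ (r + (j : ℕ)) ^ 2) * d j := by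
      rw [hinner, hd, Finset.mul_sum]
      exact Finset.sum_congr rfl fun a _ => by rw [hee_apply]; ring
    have h0 := htne (r + (j : ℕ)) (by omega)
    rw [h1, Real.norm_eq_abs, sq_abs, mul_pow,
      Real.sq_sqrt (le_of_lt (ht (r + (j : ℕ)) (by omega))), ← mul_assoc,
      inv_mul_cancel₀ h0, one_mul]
  have hmono : ∀ j : Fin (K - r), (1 - σ (r + (j : ℕ)) ^ 2)⁻¹ ≤ (1 - σ r ^ 2)⁻¹ := by
    intro j
    have h1 := ht (r + (j : ℕ)) (by omega)
    have h2 := hσanti r (r + (j : ℕ)) (by omega)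
    have h3 := hσnn (r + (j : ℕ))
    have h4 := hσnn r
    apply inv_anti₀ htr
    nlinarith
  have hkey : (∑ c, y c ^ 2) ≤ (1 - σ r ^ 2)⁻¹ * ‖x‖ ^ 2 := by
    rw [hsum]
    calc (∑ j : Fin (K - r), d j ^ 2)
        ≤ ∑ j : Fin (K - r), (1 - σ r ^ 2)⁻¹ * ‖(inner ℝ (ee j) x : ℝ)‖ ^ 2 := by
          refine Finset.sum_le_sum fun j _ => ?_
          rw [hdj j]
          exact mul_le_mul_of_nonneg_right (hmono j) (by positivity)
      _ = (1 - σ r ^ 2)⁻¹ * ∑ j : Fin (K - r), ‖(inner ℝ (ee j) x : ℝ)‖ ^ 2 := by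
          rw [Finset.mul_sum]
      _ ≤ (1 - σ r ^ 2)⁻¹ * ‖x‖ ^ 2 :=
          mul_le_mul_of_nonneg_left hbessel (by positivity)
  have hnormy : ‖y‖ ^ 2 = ∑ c, y c ^ 2 := by
    rw [EuclideanSpace.norm_eq]
    rw [Real.sq_sqrt (Finset.sum_nonneg fun c _ => by positivity)]
    exact Finset.sum_congr rfl fun c _ => by rw [Real.norm_eq_abs, sq_abs]
  have hfin : ‖y‖ ^ 2 ≤ (2 / (1 - σ r ^ 2) * ‖x‖) ^ 2 := by
    rw [hnormy]
    refine le_trans hkey ?_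
    rw [mul_pow, div_pow]
    have hx2 : (0:ℝ) ≤ ‖x‖ ^ 2 := by positivity
    have hle1 : 1 - σ r ^ 2 ≤ 1 := by nlinarith [hσnn r, sq_nonneg (σ r)]
    have hstep : (1 - σ r ^ 2)⁻¹ ≤ 2 ^ 2 / (1 - σ r ^ 2) ^ 2 := by
      rw [inv_eq_one_div, div_le_div_iff₀ htr (by positivity)]
      nlinarith
    exact mul_le_mul_of_nonneg_right hstep hx2
  calc ‖y‖ = Real.sqrt (‖y‖ ^ 2) := (Real.sqrt_sq (norm_nonneg y)).symm
    _ ≤ Real.sqrt ((2 / (1 - σ r ^ 2) * ‖x‖) ^ 2) := Real.sqrt_le_sqrt hfin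
    _ = 2 / (1 - σ r ^ 2) * ‖x‖ := Real.sqrt_sq (by positivity)
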